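/- For every real ε > 0 there exists a constant C > 0 such that for every integer k ≥ 1 one has Σ_{n ≥ 1, k² ∣ n, n ∣ k^∞} n^{−(1/2 + ε)} ≤ C · k^{−(1 + ε)}. -/

import Mathlib

open Classical in
/-- For every real `ε > 0` there exists a constant `C > 0` such that for every
integer `k ≥ 1` one has `Σ_{n ≥ 1, k² ∣ n, n ∣ k^∞} n^{−(1/2 + ε)} ≤ C · k^{−(1 + ε)}`,
where `n ∣ k^∞` means every prime dividing `n` also divides `k`. -/
theorem stmt_8 (ε : ℝ) (hε : 0 < ε) :
    ∃ C : ℝ, 0 < C ∧ ∀ k : ℕ, 1 ≤ k →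
      (∑' n : ℕ, if 0 < n ∧ k ^ 2 ∣ n ∧ (∀ p : ℕ, p.Prime → p ∣ n → p ∣ k)
          then (n : ℝ) ^ (-(1 / 2 + ε)) else 0)
        ≤ C * (k : ℝ) ^ (-(1 + ε)) := by
  set c : ℝ := 1 / 2 + ε with hc
  have hc0 : (0:ℝ) < c := by rw [hc]; linarith
  have h2c : (2:ℝ) ^ (-c) < 1 :=
    Real.rpow_lt_one_of_one_lt_of_neg one_lt_two (by linarith)
  have h2cnn : (0:ℝ) ≤ (2:ℝ) ^ (-c) := Real.rpow_nonneg (by norm_num) _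
  have h2c0 : (0:ℝ) < 1 - (2:ℝ) ^ (-c) := by linarith
  set B : ℝ := (1 - (2:ℝ) ^ (-c))⁻¹ with hBdef
  have hB1 : 1 ≤ B := by
    rw [hBdef, one_le_inv_iff₀]
    exact ⟨h2c0, by linarith⟩
  obtain ⟨P, hP⟩ := exists_nat_gt ((2:ℝ) ^ (1/ε))
  set Q : ℕ := P + 4 with hQdef
  have hQ4 : (4:ℝ) ≤ (Q:ℕ) := by exact_mod_cast (by omega : 4 ≤ Q)
  have hQP : (2:ℝ) ^ (1/ε) ≤ (Q:ℝ) := by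
    have h1 : (P:ℝ) ≤ Q := by exact_mod_cast Nat.le_add_right P 4
    linarith
  refine ⟨B ^ Q, by positivity, ?_⟩
  intro k hk
  have hkne : k ≠ 0 := by omega
  have hk0 : (0:ℝ) < k := by exact_mod_cast hk
  -- the completely multiplicative function n ↦ n ^ (-c)
  let f : ℕ →* ℝ :=
    { toFun := fun n ↦ (n:ℝ) ^ (-c)
      map_one' := by simp
      map_mul' := fun m n ↦ by
        push_cast
        exact Real.mul_rpow (Nat.cast_nonneg m) (Nat.cast_nonneg n) }
  have hfval : ∀ n : ℕ, f n = (n:ℝ) ^ (-c) := fun _ ↦ rfl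
  have hfp : ∀ {p : ℕ}, p.Prime → ‖f p‖ < 1 := by
    intro p hp
    rw [hfval, Real.norm_eq_abs, abs_of_nonneg (Real.rpow_nonneg (Nat.cast_nonneg p) _)]
    exact Real.rpow_lt_one_of_one_lt_of_neg (by exact_mod_cast hp.one_lt) (by linarith)
  have hE := (EulerProduct.summable_and_hasSum_factoredNumbers_prod_filter_prime_geometric
    hfp k.primeFactors).2
  have hfilter : Finset.filter (fun p ↦ p.Prime) k.primeFactors = k.primeFactors :=
    Finset.filter_true_of_mem fun p hp ↦ (Nat.mem_primeFactors.mp hp).1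
  rw [hfilter] at hE
  set Pr : ℝ := ∏ p ∈ k.primeFactors, (1 - f p)⁻¹ with hPr
  -- facts about factors
  have hfle : ∀ p ∈ k.primeFactors, f p ≤ (2:ℝ) ^ (-c) := by
    intro p hp
    have hp2 : (2:ℝ) ≤ (p:ℝ) := by exact_mod_cast (Nat.mem_primeFactors.mp hp).1.two_le
    rw [hfval]
    exact Real.rpow_le_rpow_of_nonpos (by norm_num) hp2 (by linarith)
  have hfpos : ∀ p ∈ k.primeFactors, (0:ℝ) < 1 - f p := by
    intro p hp
    have := hfle p hp
    linarith
  have hfinv : ∀ p ∈ k.primeFactors, (1 - f p)⁻¹ ≤ B := by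
    intro p hp
    rw [hBdef]
    exact inv_anti₀ h2c0 (by linarith [hfle p hp])
  -- transport the sum: n = k^2 * m with m factored
  have hk2 : (0:ℕ) < k ^ 2 := by positivity
  have hinj : Function.Injective (fun m : Nat.factoredNumbers k.primeFactors ↦ k ^ 2 * (m : ℕ)) := by
    intro a b hab
    simp only at hab
    exact Subtype.ext (Nat.eq_of_mul_eq_mul_left hk2 hab)
  have hmemF : ∀ m : ℕ, m ∈ Nat.factoredNumbers k.primeFactors ↔
      ∀ p : ℕ, p.Prime → p ∣ m → p ∣ k := by
    intro m
    rw [Nat.mem_factoredNumbers']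
    constructor
    · exact fun h p hp hpm ↦ (Nat.mem_primeFactors.mp (h p hp hpm)).2.1
    · exact fun h p hp hpm ↦ Nat.mem_primeFactors.mpr ⟨hp, h p hp hpm, hkne⟩
  have hS : HasSum (fun n : ℕ ↦ if 0 < n ∧ k ^ 2 ∣ n ∧ (∀ p : ℕ, p.Prime → p ∣ n → p ∣ k)
      then (n : ℝ) ^ (-c) else 0) (((k:ℝ) ^ 2) ^ (-c) * Pr) := by
    have hrange : ∀ n : ℕ,
        n ∉ Set.range (fun m : Nat.factoredNumbers k.primeFactors ↦ k ^ 2 * (m : ℕ)) →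
        (if 0 < n ∧ k ^ 2 ∣ n ∧ (∀ p : ℕ, p.Prime → p ∣ n → p ∣ k)
          then (n : ℝ) ^ (-c) else 0) = 0 := by
      intro n hn
      rw [if_neg]
      rintro ⟨hn0, ⟨m, rfl⟩, hprimes⟩
      refine hn ⟨⟨m, ?_⟩, rfl⟩
      rw [hmemF]
      exact fun p hp hpm ↦ hprimes p hp (hpm.mul_left _)
    rw [← hinj.hasSum_iff hrange]
    have hcomp : ∀ m : Nat.factoredNumbers k.primeFactors,
        ((fun n : ℕ ↦ if 0 < n ∧ k ^ 2 ∣ n ∧ (∀ p : ℕ, p.Prime → p ∣ n → p ∣ k)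
            then (n : ℝ) ^ (-c) else 0) ∘ fun m : Nat.factoredNumbers k.primeFactors ↦
            k ^ 2 * (m : ℕ)) m
          = ((k:ℝ) ^ 2) ^ (-c) * f m := by
      intro m
      have hm0 : (m:ℕ) ≠ 0 := Nat.ne_zero_of_mem_factoredNumbers m.2
      have hmF := (hmemF m).mp m.2
      have hcond : 0 < k ^ 2 * (m:ℕ) ∧ k ^ 2 ∣ k ^ 2 * (m:ℕ) ∧
          ∀ p : ℕ, p.Prime → p ∣ k ^ 2 * (m:ℕ) → p ∣ k := by
        refine ⟨by positivity, dvd_mul_right _ _, fun p hp hpd ↦ ?_⟩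
        rcases hp.dvd_mul.mp hpd with h | h
        · exact hp.dvd_of_dvd_pow h
        · exact hmF p hp h
      simp only [Function.comp]
      rw [if_pos hcond, hfval]
      push_cast
      rw [Real.mul_rpow (by positivity) (Nat.cast_nonneg _)]
    rw [funext hcomp]
    exact hE.mul_left _
  rw [hS.tsum_eq]
  -- bound the product
  have hprod_small : ∏ p ∈ k.primeFactors.filter (fun p ↦ p < Q), (1 - f p)⁻¹ ≤ B ^ Q := by
    have h1 : ∏ p ∈ k.primeFactors.filter (fun p ↦ p < Q), (1 - f p)⁻¹
        ≤ ∏ _p ∈ k.primeFactors.filter (fun p ↦ p < Q), B := by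
      refine Finset.prod_le_prod (fun p hp ↦ ?_) (fun p hp ↦ ?_)
      · exact inv_nonneg.mpr (hfpos p (Finset.mem_filter.mp hp).1).le
      · exact hfinv p (Finset.mem_filter.mp hp).1
    rw [Finset.prod_const] at h1
    refine h1.trans (pow_le_pow_right₀ (by linarith) ?_)
    refine (Finset.card_le_card ?_).trans (Finset.card_range Q).le
    intro p hp
    simp only [Finset.mem_filter] at hp
    exact Finset.mem_range.mpr hp.2
  have hprod_large : ∏ p ∈ k.primeFactors.filter (fun p ↦ ¬ p < Q), (1 - f p)⁻¹
      ≤ (k:ℝ) ^ ε := by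
    have h1 : ∏ p ∈ k.primeFactors.filter (fun p ↦ ¬ p < Q), (1 - f p)⁻¹
        ≤ ∏ p ∈ k.primeFactors.filter (fun p ↦ ¬ p < Q), (p:ℝ) ^ ε := by
      refine Finset.prod_le_prod (fun p hp ↦ ?_) (fun p hp ↦ ?_)
      · exact inv_nonneg.mpr (hfpos p (Finset.mem_filter.mp hp).1).le
      · obtain ⟨hpk, hpQ⟩ := Finset.mem_filter.mp hp
        have hQp : (Q:ℝ) ≤ (p:ℝ) := by exact_mod_cast Nat.le_of_not_lt hpQ
        have hp1 : (1:ℝ) ≤ (p:ℝ) := by linarith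
        -- f p ≤ 1/2
        have hfhalf : f p ≤ 1/2 := by
          rw [hfval]
          have e1 : (p:ℝ) ^ (-c) ≤ (p:ℝ) ^ (-(1/2) : ℝ) :=
            Real.rpow_le_rpow_of_exponent_le hp1 (by rw [hc]; linarith)
          have e2 : (p:ℝ) ^ (-(1/2) : ℝ) ≤ (4:ℝ) ^ (-(1/2) : ℝ) :=
            Real.rpow_le_rpow_of_nonpos (by norm_num) (by linarith) (by norm_num)
          have e3 : (4:ℝ) ^ (-(1/2) : ℝ) = 1/2 := by
            rw [show (4:ℝ) = 2 ^ (2:ℕ) by norm_num, ← Real.rpow_natCast 2 2,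
              ← Real.rpow_mul (by norm_num),
              show ((2:ℕ):ℝ) * -(1/2) = -1 by push_cast; ring, Real.rpow_neg_one]
            norm_num
          linarith [e1, e2.trans_eq e3]
        -- p ^ ε ≥ 2
        have hp2ε : (2:ℝ) ≤ (p:ℝ) ^ ε := by
          have e1 : ((2:ℝ) ^ (1/ε)) ^ ε ≤ (p:ℝ) ^ ε :=
            Real.rpow_le_rpow (Real.rpow_nonneg (by norm_num) _) (by linarith) hε.le
          rwa [← Real.rpow_mul (by norm_num), one_div,
            inv_mul_cancel₀ hε.ne', Real.rpow_one] at e1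
        have hpos : (0:ℝ) < 1 - f p := hfpos p hpk
        rw [inv_le_iff_one_le_mul₀ hpos]
        nlinarith
    refine h1.trans ?_
    have h2 : ∏ p ∈ k.primeFactors.filter (fun p ↦ ¬ p < Q), (p:ℝ) ^ ε
        ≤ ∏ p ∈ k.primeFactors, (p:ℝ) ^ ε := by
      have hone : (1:ℝ) ≤ ∏ p ∈ k.primeFactors.filter (fun p ↦ p < Q), (p:ℝ) ^ ε := by
        calc (1:ℝ) = ∏ _p ∈ k.primeFactors.filter (fun p ↦ p < Q), (1:ℝ) :=
              (Finset.prod_const_one).symm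
          _ ≤ _ := by
              refine Finset.prod_le_prod (fun _ _ ↦ zero_le_one) (fun p hp ↦ ?_)
              have hp1 : (1:ℝ) ≤ (p:ℝ) := by
                exact_mod_cast (Nat.mem_primeFactors.mp (Finset.mem_filter.mp hp).1).1.one_lt.le
              calc (1:ℝ) = 1 ^ ε := (Real.one_rpow ε).symm
                _ ≤ (p:ℝ) ^ ε := Real.rpow_le_rpow (by norm_num) hp1 hε.le
      rw [← Finset.prod_filter_mul_prod_filter_not k.primeFactors (fun p ↦ p < Q)
        (fun p ↦ (p:ℝ) ^ ε)]
      exact le_mul_of_one_le_left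
        (Finset.prod_nonneg fun p _ ↦ Real.rpow_nonneg (Nat.cast_nonneg p) ε) hone
    refine h2.trans ?_
    rw [Real.finset_prod_rpow _ _ (fun p _ ↦ Nat.cast_nonneg p) ε]
    refine Real.rpow_le_rpow (Finset.prod_nonneg fun p _ ↦ Nat.cast_nonneg p) ?_ hε.le
    rw [← Nat.cast_prod]
    exact_mod_cast Nat.le_of_dvd (by omega) (Nat.prod_primeFactors_dvd k)
  have hPrle : Pr ≤ B ^ Q * (k:ℝ) ^ ε := by
    rw [hPr, ← Finset.prod_filter_mul_prod_filter_not k.primeFactors (fun p ↦ p < Q)]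
    refine mul_le_mul hprod_small hprod_large
      (Finset.prod_nonneg fun p hp ↦ inv_nonneg.mpr (hfpos p (Finset.mem_filter.mp hp).1).le)
      (by positivity)
  calc ((k:ℝ) ^ 2) ^ (-c) * Pr ≤ ((k:ℝ) ^ 2) ^ (-c) * (B ^ Q * (k:ℝ) ^ ε) :=
        mul_le_mul_of_nonneg_left hPrle (Real.rpow_nonneg (by positivity) _)
    _ = B ^ Q * (k:ℝ) ^ (-(1 + ε)) := by
        have hkk : ((k:ℝ) ^ 2) ^ (-c) * (k:ℝ) ^ ε = (k:ℝ) ^ (-(1 + ε)) := by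
          rw [← Real.rpow_natCast (k:ℝ) 2, ← Real.rpow_mul hk0.le, ← Real.rpow_add hk0]
          congr 1
          push_cast
          rw [hc]; ring
        rw [← hkk]; ring
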